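/- For n = 2 and every λ > 0 and every symmetric 2×2 matrix τ, one has H⁽²⁾(τ) ≤ h_λ(τ), where h_λ is the quasiconvexification of the two-well integrand: h_λ(τ) = λ^{-1/2}|τ|² + λ^{1/2} if ρ⁽²⁾(τ) ≥ √λ, and h_λ(τ) = 2(ρ⁽²⁾(τ) − λ^{-1/2}|det τ|) otherwise. -/

import Mathlib

noncomputable def frob {n : ℕ} (τ : Matrix (Fin n) (Fin n) ℝ) : ℝ :=
  Real.sqrt (∑ i, ∑ j, (τ i j) ^ 2)

/-- `ρ⁽²⁾(τ) = |τ₁| + |τ₂|`, the sum of absolute values of eigenvalues. -/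
noncomputable def rho2 (τ : Matrix (Fin 2) (Fin 2) ℝ) : ℝ :=
  if h : τ.IsHermitian then |h.eigenvalues 0| + |h.eigenvalues 1| else 0

/-- `H⁽²⁾(τ) = 2|τ₂|`, twice the largest absolute eigenvalue. -/
noncomputable def H2 (τ : Matrix (Fin 2) (Fin 2) ℝ) : ℝ :=
  if h : τ.IsHermitian then 2 * max |h.eigenvalues 0| |h.eigenvalues 1| else 0

/-- the quasiconvexified integrand `h_λ` for `n = 2`. -/
noncomputable def hlam (lam : ℝ) (τ : Matrix (Fin 2) (Fin 2) ℝ) : ℝ :=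
  if Real.sqrt lam ≤ rho2 τ then (frob τ) ^ 2 / Real.sqrt lam + Real.sqrt lam
  else 2 * (rho2 τ - |τ.det| / Real.sqrt lam)

lemma trace_eq_sum_eigenvalues (τ : Matrix (Fin 2) (Fin 2) ℝ) (hτ : τ.IsHermitian) :
    τ.trace = hτ.eigenvalues 0 + hτ.eigenvalues 1 := by
  have h : τ.trace = (Matrix.diagonal (RCLike.ofReal ∘ hτ.eigenvalues) :
      Matrix (Fin 2) (Fin 2) ℝ).trace := by
    conv_lhs => rw [hτ.spectral_theorem]
    rw [Unitary.conjStarAlgAut_apply, Matrix.trace_mul_cycle, Unitary.coe_star_mul_self, Matrix.one_mul]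
  rw [h, Matrix.trace_diagonal, Fin.sum_univ_two]
  simp

set_option maxHeartbeats 1000000 in
/-- for `n = 2`, every `λ > 0` and every symmetric `τ`, `H⁽²⁾(τ) ≤ h_λ(τ)`. -/
theorem H2_le_hlam (lam : ℝ) (hlam_pos : 0 < lam) (τ : Matrix (Fin 2) (Fin 2) ℝ)
    (hτ : τ.IsHermitian) : H2 τ ≤ hlam lam τ := by
  set e0 := hτ.eigenvalues 0 with he0
  set e1 := hτ.eigenvalues 1 with he1
  set s := Real.sqrt lam with hs
  have hs_pos : 0 < s := Real.sqrt_pos.mpr hlam_pos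
  have hsym : τ 1 0 = τ 0 1 := by
    have := congrFun (congrFun hτ 0) 1
    simpa [Matrix.conjTranspose_apply] using this
  have htr : τ 0 0 + τ 1 1 = e0 + e1 := by
    have := trace_eq_sum_eigenvalues τ hτ
    rwa [Matrix.trace, Fin.sum_univ_two] at this
  have hdet : τ.det = e0 * e1 := by
    have := hτ.det_eq_prod_eigenvalues
    rwa [Fin.prod_univ_two] at this
  have hdet' : τ.det = τ 0 0 * τ 1 1 - τ 0 1 * τ 0 1 := by
    rw [Matrix.det_fin_two, hsym]
  have hfrob : (frob τ) ^ 2 = e0 ^ 2 + e1 ^ 2 := by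
    have hnn : (0:ℝ) ≤ ∑ i, ∑ j, (τ i j) ^ 2 :=
      Finset.sum_nonneg fun i _ => Finset.sum_nonneg fun j _ => sq_nonneg _
    rw [frob, Real.sq_sqrt hnn, Fin.sum_univ_two, Fin.sum_univ_two, Fin.sum_univ_two, hsym]
    linear_combination (τ 0 0 + τ 1 1 + e0 + e1) * htr - 2 * hdet + 2 * hdet'
  have hrho : rho2 τ = |e0| + |e1| := by rw [rho2, dif_pos hτ]
  have hH2 : H2 τ = 2 * max |e0| |e1| := by rw [H2, dif_pos hτ]
  have habsdet : |τ.det| = |e0| * |e1| := by rw [hdet, abs_mul]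
  set a := |e0| with ha
  set b := |e1| with hb
  have ha0 : 0 ≤ a := abs_nonneg _
  have hb0 : 0 ≤ b := abs_nonneg _
  have hea : e0 ^ 2 = a ^ 2 := (sq_abs e0).symm
  have heb : e1 ^ 2 = b ^ 2 := (sq_abs e1).symm
  rw [hH2, hlam, hrho, habsdet, hfrob, hea, heb]
  by_cases hcase : s ≤ a + b
  · rw [if_pos hcase]
    have key : 2 * max a b ≤ (a ^ 2 + b ^ 2 + s * s) / s := by
      rw [le_div_iff₀ hs_pos]
      rcases max_cases a b with ⟨hm, _⟩ | ⟨hm, _⟩ <;> rw [hm] <;>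
        nlinarith [sq_nonneg (a - s), sq_nonneg (b - s)]
    calc 2 * max a b ≤ (a ^ 2 + b ^ 2 + s * s) / s := key
      _ = (a ^ 2 + b ^ 2) / s + s := by field_simp
  · rw [if_neg hcase]
    push_neg at hcase
    have hmin : a * b / s ≤ min a b := by
      rw [div_le_iff₀ hs_pos]
      rcases le_total a b with h | h
      · rw [min_eq_left h]
        have : b ≤ s := by linarith
        nlinarith
      · rw [min_eq_right h]
        have : a ≤ s := by linarith
        nlinarith
    have hmm : max a b + min a b = a + b := max_add_min a b
    linarith
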